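/- arXiv:2010.04627 — 3 statements merged into one kernel-verified Lean document; each statement's English description precedes it below -/
import Mathlib

section
/- Let D ≥ 1 and consider a complete binary tree of depth D with real split values s_t ≠ 0 at every internal node. Then for every node t ∈ {2, …, 2^{D+1} − 1}, the reward q_t satisfies: q_t > 0 if t lies on the traversal path, and q_t < 0 otherwise. (Lemma 1, sign characterization of rewards.) -/
/-- The traversal path of a binary tree with split values `s`:
`path s 0 = 1` (root), and from node `p_d` we go to the left child `2 * p_d`
if `s (p_d) < 0` and to the right child `2 * p_d + 1` otherwise. -/
noncomputable def path (s : ℕ → ℝ) : ℕ → ℕ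
  | 0 => 1
  | d + 1 => if s (path s d) < 0 then 2 * path s d else 2 * path s d + 1

/-- The reward `q_t`: `q 1 = 1`, and for `t ≥ 2`, `q t` is the minimum over all
proper ancestors `t'` of `t` of `s t'` if `t` descends through the right child of `t'`
and `-s t'` if `t` descends through the left child of `t'`.  Equivalently, recursively,
`q t = min (±s (t/2)) (q (t/2))` for `t ≥ 4`, with base cases `q 2 = -s 1`, `q 3 = s 1`. -/
noncomputable def reward (s : ℕ → ℝ) : ℕ → ℝ
  | 0 => 0
  | 1 => 1
  | 2 => - s 1
  | 3 => s 1
  | (t + 4) =>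
      min (if (t + 4) % 2 = 1 then s ((t + 4) / 2) else - s ((t + 4) / 2))
        (reward s ((t + 4) / 2))
decreasing_by omega

lemma path_pos (s : ℕ → ℝ) : ∀ d, 1 ≤ path s d
  | 0 => le_refl 1
  | d + 1 => by
    have := path_pos s d
    unfold path; split <;> omega

lemma path_lb (s : ℕ → ℝ) : ∀ d, 2 ^ d ≤ path s d
  | 0 => le_refl 1
  | d + 1 => by
    have := path_lb s d
    unfold path
    split <;> (rw [pow_succ]; omega)

lemma path_div (s : ℕ → ℝ) (d : ℕ) : path s (d + 1) / 2 = path s d := by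
  have := path_pos s d
  rw [path]; split <;> omega

lemma reward_eq (s : ℕ → ℝ) (t : ℕ) (h : 4 ≤ t) :
    reward s t = min (if t % 2 = 1 then s (t / 2) else - s (t / 2)) (reward s (t / 2)) := by
  obtain ⟨m, rfl⟩ : ∃ m, t = m + 4 := ⟨t - 4, by omega⟩
  rw [reward]


/-- Lemma 1 (sign characterization of rewards): for a complete binary tree of depth
`D ≥ 1` with nonzero split values at every internal node, every node
`t ∈ {2, …, 2^(D+1) - 1}` has `q t > 0` if `t` lies on the traversal path and
`q t < 0` otherwise. -/
theorem stmt_0 (D : ℕ) (hD : 1 ≤ D) (s : ℕ → ℝ)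
    (hs : ∀ t, 1 ≤ t → t ≤ 2 ^ D - 1 → s t ≠ 0)
    (t : ℕ) (ht2 : 2 ≤ t) (htN : t ≤ 2 ^ (D + 1) - 1) :
    ((∃ d ≤ D, path s d = t) → 0 < reward s t) ∧
    (¬ (∃ d ≤ D, path s d = t) → reward s t < 0) := by
  have hpow : 2 ^ (D + 1) = 2 * 2 ^ D := by ring
  have h1D : (1:ℕ) ≤ 2 ^ D - 1 := by
    have : 2 ^ 1 ≤ 2 ^ D := Nat.pow_le_pow_right (by norm_num) hD
    omega
  revert ht2 htN
  induction t using Nat.strong_induction_on with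
  | _ t IH =>
    intro ht2 htN
    rcases Nat.lt_or_ge t 4 with h4 | h4
    · -- t = 2 or t = 3
      have hs1 : s 1 ≠ 0 := hs 1 le_rfl h1D
      have hpath1 : path s 1 = if s 1 < 0 then 2 else 3 := by
        rw [path]; simp [path]
      have key : ∀ d ≤ D, path s d = t → (t = 2 ∧ s 1 < 0) ∨ (t = 3 ∧ 0 ≤ s 1) := by
        intro d hd hpd
        cases d with
        | zero => simp [path] at hpd; omega
        | succ d' =>
          have hp' : path s d' = 1 := by
            have hlb := path_lb s d'
            have hub : path s (d' + 1) / 2 = path s d' := path_div s d'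
            rw [hpd] at hub
            omega
          rw [path, hp'] at hpd
          split at hpd
          · next hlt => exact Or.inl ⟨by omega, hlt⟩
          · next hge => exact Or.inr ⟨by omega, not_lt.mp hge⟩
      have hrw2 : reward s 2 = - s 1 := by rw [reward]
      have hrw3 : reward s 3 = s 1 := by rw [reward]
      interval_cases t
      · constructor
        · rintro ⟨d, hd, hpd⟩
          rcases key d hd hpd with ⟨-, h⟩ | ⟨h, -⟩
          · rw [hrw2]; linarith
          · omega
        · intro hnot
          rw [hrw2]
          have hnl : ¬ s 1 < 0 := fun hlt =>
            hnot ⟨1, hD, by rw [hpath1, if_pos hlt]⟩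
          have : 0 < s 1 := lt_of_le_of_ne (not_lt.mp hnl) (Ne.symm hs1)
          linarith
      · constructor
        · rintro ⟨d, hd, hpd⟩
          rcases key d hd hpd with ⟨h, -⟩ | ⟨-, h⟩
          · omega
          · rw [hrw3]; exact lt_of_le_of_ne h (Ne.symm hs1)
        · intro hnot
          rw [hrw3]
          rcases lt_or_gt_of_ne hs1 with h | h
          · exact h
          · exact absurd ⟨1, hD, by rw [hpath1, if_neg (not_lt.mpr h.le)]⟩ hnot
    · -- t ≥ 4
      set u := t / 2 with hu
      have hu2 : 2 ≤ u := by omega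
      have huD : u ≤ 2 ^ D - 1 := by omega
      have hsu : s u ≠ 0 := hs u (by omega) huD
      have hre := reward_eq s t h4
      obtain ⟨hpos, hneg⟩ := IH u (by omega) hu2 (by omega)
      constructor
      · rintro ⟨d, hd, hpd⟩
        cases d with
        | zero => simp [path] at hpd; omega
        | succ d' =>
          have hp' : path s d' = u := by
            have := path_div s d'
            rw [hpd] at this
            omega
          have hq : 0 < reward s u := hpos ⟨d', by omega, hp'⟩
          rw [path, hp'] at hpd
          rw [hre]
          rcases lt_or_ge (s u) 0 with hlt | hge
          · rw [if_pos hlt] at hpd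
            rw [if_neg (by omega : ¬ t % 2 = 1)]
            exact lt_min (by linarith) hq
          · rw [if_neg (not_lt.mpr hge)] at hpd
            rw [if_pos (by omega : t % 2 = 1)]
            exact lt_min (lt_of_le_of_ne hge (Ne.symm hsu)) hq
      · intro hnot
        rw [hre]
        by_cases hup : ∃ d ≤ D, path s d = u
        · obtain ⟨d', hd', hp'⟩ := hup
          have hd'D : d' < D := by
            have hlb := path_lb s d'
            rw [hp'] at hlb
            have h2 : 2 ^ d' < 2 ^ D := by omega
            exact (Nat.pow_lt_pow_iff_right (by norm_num)).mp h2
          have hnt : path s (d' + 1) ≠ t := fun h => hnot ⟨d' + 1, by omega, h⟩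
          rw [path, hp'] at hnt
          rcases lt_or_ge (s u) 0 with hlt | hge
          · rw [if_pos hlt] at hnt
            rw [if_pos (by omega : t % 2 = 1)]
            exact lt_of_le_of_lt (min_le_left _ _) hlt
          · rw [if_neg (not_lt.mpr hge)] at hnt
            rw [if_neg (by omega : ¬ t % 2 = 1)]
            have hgt : 0 < s u := lt_of_le_of_ne hge (Ne.symm hsu)
            calc min (- s u) (reward s u) ≤ - s u := min_le_left _ _
              _ < 0 := by linarith
        · exact lt_of_le_of_lt (min_le_right _ _) (hneg hup)
end

section
/- Let λ > 0, let q_{it} be real rewards, and let a* be the unique minimizer over the set C ∩ [0,1]^N = {a ∈ [0,1]^N : a_t ≤ a_{p(t)} for all t ≥ 2} of h(a) = Σ_{t=1}^N [ (λ/2) a_t² + ½ Σ_{i=1}^n max(q_{it} + ½ − a_t, 0)² ]. Define z*_{it} = max(0, min(a*_t, q_{it} + ½)). Then (z*, a*) is the unique minimizer of Problem (P). (Proposition 2.) -/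
/-- Feasibility for Problem (P): nodes are indexed by `t : Fin N` representing node
number `(t : ℕ) + 1 ∈ {1, …, N}`; the parent of node number `m ≥ 2` is node number
`⌊m/2⌋`, i.e. the parent of index `t` (with `(t : ℕ) ≥ 1`) is the index
`((t : ℕ) + 1) / 2 - 1`.  The constraints are `a_t ≤ a_{p(t)}` for all non-root
nodes, `0 ≤ z_{it} ≤ a_t` for all `i, t`, and `0 ≤ a_t ≤ 1` for all `t`. -/
def Feasible (n N : ℕ) (p : (Fin n → Fin N → ℝ) × (Fin N → ℝ)) : Prop :=
  (∀ t : Fin N, 1 ≤ (t : ℕ) →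
      p.2 t ≤ p.2 ⟨((t : ℕ) + 1) / 2 - 1, by have := t.isLt; omega⟩) ∧
  (∀ (i : Fin n) (t : Fin N), 0 ≤ p.1 i t ∧ p.1 i t ≤ p.2 t) ∧
  (∀ t : Fin N, 0 ≤ p.2 t ∧ p.2 t ≤ 1)

/-- The objective of Problem (P):
`(λ/2) ∑_t a_t² + ½ ∑_i ∑_t (z_{it} − q_{it} − ½)²`. -/
noncomputable def objP (n N : ℕ) (lam : ℝ) (q : Fin n → Fin N → ℝ)
    (p : (Fin n → Fin N → ℝ) × (Fin N → ℝ)) : ℝ :=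
  lam / 2 * ∑ t, (p.2 t) ^ 2 + 1 / 2 * ∑ i, ∑ t, (p.1 i t - q i t - 1 / 2) ^ 2

lemma clampK (a c : ℝ) (ha : 0 ≤ a) :
    (max 0 (min a c) - c) ^ 2 = max (c - a) 0 ^ 2 + min c 0 ^ 2 := by
  rcases le_total c 0 with h | h
  · rw [min_eq_right (h.trans ha), max_eq_left h, max_eq_right (by linarith : c - a ≤ 0),
      min_eq_left h]
    ring
  · rw [min_eq_right h]
    rcases le_total a c with h5 | h5
    · rw [min_eq_left h5, max_eq_right ha, max_eq_left (by linarith : (0:ℝ) ≤ c - a)]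
      ring
    · rw [min_eq_right h5, max_eq_right h, max_eq_right (by linarith : c - a ≤ 0)]
      ring

lemma clamp_le (z a c : ℝ) (hz0 : 0 ≤ z) (hza : z ≤ a) :
    (max 0 (min a c) - c) ^ 2 ≤ (z - c) ^ 2 := by
  have ha : 0 ≤ a := hz0.trans hza
  rcases le_total c 0 with h | h
  · rw [min_eq_right (h.trans ha), max_eq_left h]
    nlinarith
  · rcases le_total a c with h5 | h5
    · rw [min_eq_left h5, max_eq_right ha]
      nlinarith
    · rw [min_eq_right h5, max_eq_right h]
      nlinarith

lemma clamp_lt (z a c : ℝ) (hz0 : 0 ≤ z) (hza : z ≤ a)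
    (hne : z ≠ max 0 (min a c)) :
    (max 0 (min a c) - c) ^ 2 < (z - c) ^ 2 := by
  have ha : 0 ≤ a := hz0.trans hza
  rcases le_total c 0 with h | h
  · rw [min_eq_right (h.trans ha), max_eq_left h] at hne ⊢
    have : 0 < z := lt_of_le_of_ne hz0 (Ne.symm hne)
    nlinarith
  · rcases le_total a c with h5 | h5
    · rw [min_eq_left h5, max_eq_right ha] at hne ⊢
      have : z < a := lt_of_le_of_ne hza hne
      nlinarith
    · rw [min_eq_right h5, max_eq_right h] at hne ⊢
      have : (z - c) ≠ 0 := sub_ne_zero.mpr hne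
      have h2 : 0 < (z - c) ^ 2 := by positivity
      nlinarith


/-- Proposition 2: if `a*` is the unique minimizer over
`C ∩ [0,1]^N = {a ∈ [0,1]^N : a_t ≤ a_{p(t)} for all non-root t}` of
`h(a) = ∑_t [ (λ/2) a_t² + ½ ∑_i max(q_{it} + ½ − a_t, 0)² ]`, and
`z*_{it} = max(0, min(a*_t, q_{it} + ½))`, then `(z*, a*)` is the unique
minimizer of Problem (P). -/
theorem stmt_2 (n N : ℕ) (hn : 1 ≤ n) (hN : 2 ≤ N) (lam : ℝ) (hlam : 0 < lam)
    (q : Fin n → Fin N → ℝ)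
    (astar : Fin N → ℝ)
    (hafeas : (∀ t : Fin N, 1 ≤ (t : ℕ) →
        astar t ≤ astar ⟨((t : ℕ) + 1) / 2 - 1, by have := t.isLt; omega⟩) ∧
      ∀ t : Fin N, 0 ≤ astar t ∧ astar t ≤ 1)
    (hamin : ∀ a : Fin N → ℝ,
      ((∀ t : Fin N, 1 ≤ (t : ℕ) →
          a t ≤ a ⟨((t : ℕ) + 1) / 2 - 1, by have := t.isLt; omega⟩) ∧
        ∀ t : Fin N, 0 ≤ a t ∧ a t ≤ 1) →
      a ≠ astar →
      (∑ t, (lam / 2 * (astar t) ^ 2 + 1 / 2 * ∑ i, max (q i t + 1 / 2 - astar t) 0 ^ 2))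
        < ∑ t, (lam / 2 * (a t) ^ 2 + 1 / 2 * ∑ i, max (q i t + 1 / 2 - a t) 0 ^ 2))
    (zstar : Fin n → Fin N → ℝ)
    (hzstar : ∀ i t, zstar i t = max 0 (min (astar t) (q i t + 1 / 2))) :
    Feasible n N (zstar, astar) ∧
    ∀ p : (Fin n → Fin N → ℝ) × (Fin N → ℝ), Feasible n N p → p ≠ (zstar, astar) →
      objP n N lam q (zstar, astar) < objP n N lam q p := by
  have hzle : ∀ i t, 0 ≤ zstar i t ∧ zstar i t ≤ astar t := by
    intro i t
    rw [hzstar]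
    exact ⟨le_max_left _ _, max_le (hafeas.2 t).1 (min_le_left _ _)⟩
  have hfeasstar : Feasible n N (zstar, astar) := ⟨hafeas.1, hzle, hafeas.2⟩
  refine ⟨hfeasstar, ?_⟩
  set K : ℝ := 1 / 2 * ∑ t, ∑ i, min (q i t + 1 / 2) 0 ^ 2 with hKdef
  -- lower bound for any feasible point
  have hlow : ∀ (zz : Fin n → Fin N → ℝ) (aa : Fin N → ℝ),
      (∀ i t, 0 ≤ zz i t ∧ zz i t ≤ aa t) →
      (∑ t, (lam / 2 * (aa t) ^ 2 + 1 / 2 * ∑ i, max (q i t + 1 / 2 - aa t) 0 ^ 2)) + K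
        ≤ objP n N lam q (zz, aa) := by
    intro zz aa hzz
    have h1 : ∑ i, ∑ t, (max (q i t + 1 / 2 - aa t) 0 ^ 2 + min (q i t + 1 / 2) 0 ^ 2)
        ≤ ∑ i, ∑ t, (zz i t - q i t - 1 / 2) ^ 2 := by
      apply Finset.sum_le_sum
      intro i _
      apply Finset.sum_le_sum
      intro t _
      have e2 : (zz i t - q i t - 1 / 2) ^ 2 = (zz i t - (q i t + 1 / 2)) ^ 2 := by ring
      rw [e2, ← clampK (aa t) (q i t + 1 / 2) ((hzz i t).1.trans (hzz i t).2)]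
      exact clamp_le _ _ _ (hzz i t).1 (hzz i t).2
    have h2 : ∑ i, ∑ t, (max (q i t + 1 / 2 - aa t) 0 ^ 2 + min (q i t + 1 / 2) 0 ^ 2)
        = (∑ t, ∑ i, max (q i t + 1 / 2 - aa t) 0 ^ 2)
          + ∑ t, ∑ i, min (q i t + 1 / 2) 0 ^ 2 := by
      rw [Finset.sum_comm]
      simp [Finset.sum_add_distrib]
    have h3 : ∑ t, (lam / 2 * (aa t) ^ 2 + 1 / 2 * ∑ i, max (q i t + 1 / 2 - aa t) 0 ^ 2)
        = lam / 2 * ∑ t, (aa t) ^ 2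
          + 1 / 2 * ∑ t, ∑ i, max (q i t + 1 / 2 - aa t) 0 ^ 2 := by
      simp [Finset.sum_add_distrib, Finset.mul_sum]
    unfold objP
    simp only
    rw [hKdef, h3]
    linarith
  -- exact value at the candidate
  have hstar_eq : objP n N lam q (zstar, astar)
      = (∑ t, (lam / 2 * (astar t) ^ 2 + 1 / 2 * ∑ i, max (q i t + 1 / 2 - astar t) 0 ^ 2)) + K := by
    have h1 : ∑ i, ∑ t, (zstar i t - q i t - 1 / 2) ^ 2
        = ∑ i, ∑ t, (max (q i t + 1 / 2 - astar t) 0 ^ 2 + min (q i t + 1 / 2) 0 ^ 2) := by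
      apply Finset.sum_congr rfl
      intro i _
      apply Finset.sum_congr rfl
      intro t _
      have e2 : (zstar i t - q i t - 1 / 2) ^ 2 = (zstar i t - (q i t + 1 / 2)) ^ 2 := by ring
      rw [e2, hzstar]
      exact clampK (astar t) (q i t + 1 / 2) (hafeas.2 t).1
    have h2 : ∑ i, ∑ t, (max (q i t + 1 / 2 - astar t) 0 ^ 2 + min (q i t + 1 / 2) 0 ^ 2)
        = (∑ t, ∑ i, max (q i t + 1 / 2 - astar t) 0 ^ 2)
          + ∑ t, ∑ i, min (q i t + 1 / 2) 0 ^ 2 := by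
      rw [Finset.sum_comm]
      simp [Finset.sum_add_distrib]
    have h3 : ∑ t, (lam / 2 * (astar t) ^ 2 + 1 / 2 * ∑ i, max (q i t + 1 / 2 - astar t) 0 ^ 2)
        = lam / 2 * ∑ t, (astar t) ^ 2
          + 1 / 2 * ∑ t, ∑ i, max (q i t + 1 / 2 - astar t) 0 ^ 2 := by
      simp [Finset.sum_add_distrib, Finset.mul_sum]
    unfold objP
    simp only
    rw [h1, h2, hKdef, h3]
    ring
  intro p hfeas hne
  obtain ⟨hmono, hz, ha⟩ := hfeas
  by_cases hpa : p.2 = astar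
  · have hz1 : p.1 ≠ zstar := by
      intro h
      exact hne (Prod.ext_iff.mpr ⟨h, hpa⟩)
    obtain ⟨i₀, t₀, hne0⟩ : ∃ i t, p.1 i t ≠ zstar i t := by
      by_contra h
      push_neg at h
      exact hz1 (funext fun i => funext fun t => h i t)
    have hterm_le : ∀ i t, (zstar i t - q i t - 1 / 2) ^ 2 ≤ (p.1 i t - q i t - 1 / 2) ^ 2 := by
      intro i t
      have h1 := (hz i t).1
      have h2 := (hz i t).2
      rw [hpa] at h2
      have e1 : (zstar i t - q i t - 1 / 2) ^ 2
          = (max 0 (min (astar t) (q i t + 1 / 2)) - (q i t + 1 / 2)) ^ 2 := by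
        rw [hzstar]; ring
      have e2 : (p.1 i t - q i t - 1 / 2) ^ 2 = (p.1 i t - (q i t + 1 / 2)) ^ 2 := by ring
      rw [e1, e2]
      exact clamp_le _ _ _ h1 h2
    have hterm_lt : (zstar i₀ t₀ - q i₀ t₀ - 1 / 2) ^ 2 < (p.1 i₀ t₀ - q i₀ t₀ - 1 / 2) ^ 2 := by
      have h1 := (hz i₀ t₀).1
      have h2 := (hz i₀ t₀).2
      rw [hpa] at h2
      have e1 : (zstar i₀ t₀ - q i₀ t₀ - 1 / 2) ^ 2
          = (max 0 (min (astar t₀) (q i₀ t₀ + 1 / 2)) - (q i₀ t₀ + 1 / 2)) ^ 2 := by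
        rw [hzstar]; ring
      have e2 : (p.1 i₀ t₀ - q i₀ t₀ - 1 / 2) ^ 2 = (p.1 i₀ t₀ - (q i₀ t₀ + 1 / 2)) ^ 2 := by ring
      rw [e1, e2]
      refine clamp_lt _ _ _ h1 h2 ?_
      rw [← hzstar]
      exact hne0
    have hsum : ∑ i, ∑ t, (zstar i t - q i t - 1 / 2) ^ 2
        < ∑ i, ∑ t, (p.1 i t - q i t - 1 / 2) ^ 2 := by
      apply Finset.sum_lt_sum
      · intro i _
        exact Finset.sum_le_sum fun t _ => hterm_le i t
      · refine ⟨i₀, Finset.mem_univ _, ?_⟩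
        apply Finset.sum_lt_sum
        · intro t _
          exact hterm_le i₀ t
        · exact ⟨t₀, Finset.mem_univ _, hterm_lt⟩
    unfold objP
    simp only
    rw [hpa]
    linarith
  · have hH := hamin p.2 ⟨hmono, ha⟩ hpa
    have hge := hlow p.1 p.2 hz
    rw [hstar_eq]
    calc (∑ t, (lam / 2 * (astar t) ^ 2 + 1 / 2 * ∑ i, max (q i t + 1 / 2 - astar t) 0 ^ 2)) + K
        < (∑ t, (lam / 2 * (p.2 t) ^ 2 + 1 / 2 * ∑ i, max (q i t + 1 / 2 - p.2 t) 0 ^ 2)) + K := by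
          linarith
      _ ≤ objP n N lam q p := by
          have : (p.1, p.2) = p := rfl
          rw [← this]
          exact hge
end

section
/- Let α > 0, N ≥ 1, and reals c_1, …, c_N, and define g(a) = (α/2)a² + ½ Σ_{j=1}^N max(c_j − a, 0)². Let c_{(1)} ≥ c_{(2)} ≥ … ≥ c_{(N)} be the values sorted in nonincreasing order, let a(k) = (Σ_{j=1}^k c_{(j)})/(α + k) for k ∈ {1, …, N}, and let k* be the smallest k ∈ {1, …, N} such that a(k) > c_{(k+1)}, with the convention c_{(N+1)} = −∞ (so that k* exists). Then the unique minimizer of g over the interval [0, 1] is max(0, min(1, a(k*))). (Proposition 3.) -/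
lemma term_ineq (c x m : ℝ) :
    max (c - m) 0 ^ 2 - 2 * max (c - m) 0 * (x - m) ≤ max (c - x) 0 ^ 2 := by
  rcases le_total (c - m) 0 with h | h
  · rw [max_eq_right h]
    nlinarith [sq_nonneg (max (c - x) 0)]
  · rw [max_eq_left h]
    rcases le_total (c - x) 0 with h2 | h2
    · rw [max_eq_right h2]
      nlinarith [sq_nonneg (c - m), mul_nonneg h (by linarith : (0:ℝ) ≤ x - c)]
    · rw [max_eq_left h2]
      nlinarith [sq_nonneg (x - m)]

lemma d_anti {N : ℕ} {d : ℕ → ℝ} (hsort : ∀ j, 1 ≤ j → j < N → d (j + 1) ≤ d j) :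
    ∀ i j, 1 ≤ i → i ≤ j → j ≤ N → d j ≤ d i := by
  intro i j h1 hij
  induction j, hij using Nat.le_induction with
  | base => intro _; exact le_rfl
  | succ n hn ih =>
    intro hnN
    exact le_trans (hsort n (h1.trans hn) (by omega)) (ih (by omega))


/-- Proposition 3: let `g(a) = (α/2)a² + ½ ∑_{j=1}^N max(c_j − a, 0)²`, let
`d 1 ≥ d 2 ≥ … ≥ d N` be the values `c_1, …, c_N` sorted in nonincreasing order
(a rearrangement, expressed as an equality of multisets), let
`A k = (∑_{j=1}^k d j)/(α + k)`, and let `k*` be the smallest `k ∈ {1, …, N}`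
such that `A k > d (k+1)` (with the convention `d (N+1) = −∞`, so the condition
holds vacuously at `k = N` and `k*` exists).  Then the unique minimizer of `g`
over `[0, 1]` is `max(0, min(1, A k*))`. -/
theorem stmt_3 (α : ℝ) (hα : 0 < α) (N : ℕ) (hN : 1 ≤ N) (c d : ℕ → ℝ)
    (hperm : Multiset.map c (Finset.Icc 1 N).val = Multiset.map d (Finset.Icc 1 N).val)
    (hsort : ∀ j, 1 ≤ j → j < N → d (j + 1) ≤ d j)
    (g : ℝ → ℝ)
    (hg : ∀ a, g a = α / 2 * a ^ 2 + 1 / 2 * ∑ j ∈ Finset.Icc 1 N, max (c j - a) 0 ^ 2)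
    (A : ℕ → ℝ) (hA : ∀ k, A k = (∑ j ∈ Finset.Icc 1 k, d j) / (α + k))
    (kstar : ℕ) (hk1 : 1 ≤ kstar) (hkN : kstar ≤ N)
    (hcond : kstar = N ∨ A kstar > d (kstar + 1))
    (hleast : ∀ k, 1 ≤ k → k < kstar → ¬ (k = N ∨ A k > d (k + 1))) :
    (∀ x ∈ Set.Icc (0 : ℝ) 1, g (max 0 (min 1 (A kstar))) ≤ g x) ∧
    (∀ x ∈ Set.Icc (0 : ℝ) 1, g x = g (max 0 (min 1 (A kstar))) → x = max 0 (min 1 (A kstar))) := by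
  set m := max 0 (min 1 (A kstar)) with hm
  -- sums over c equal sums over d
  have hmap : ∀ F : ℝ → ℝ, ∑ j ∈ Finset.Icc 1 N, F (c j) = ∑ j ∈ Finset.Icc 1 N, F (d j) := by
    intro F
    calc ∑ j ∈ Finset.Icc 1 N, F (c j)
        = (((Finset.Icc 1 N).val.map c).map F).sum := by rw [Multiset.map_map]; rfl
      _ = (((Finset.Icc 1 N).val.map d).map F).sum := by rw [hperm]
      _ = ∑ j ∈ Finset.Icc 1 N, F (d j) := by rw [Multiset.map_map]; rfl
  have hgd : ∀ a, g a = α / 2 * a ^ 2 + 1 / 2 * ∑ j ∈ Finset.Icc 1 N, max (d j - a) 0 ^ 2 := by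
    intro a
    have := hmap (fun y => max (y - a) 0 ^ 2)
    beta_reduce at this
    rw [hg, this]
  -- the fundamental convexity inequality
  have hmain : ∀ x : ℝ,
      g m + (x - m) * (α * m - ∑ j ∈ Finset.Icc 1 N, max (d j - m) 0)
        + α / 2 * (x - m) ^ 2 ≤ g x := by
    intro x
    have h2 : ∑ j ∈ Finset.Icc 1 N, (max (d j - m) 0 ^ 2 - 2 * max (d j - m) 0 * (x - m))
        ≤ ∑ j ∈ Finset.Icc 1 N, max (d j - x) 0 ^ 2 :=
      Finset.sum_le_sum fun j _ => term_ineq (d j) x m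
    rw [Finset.sum_sub_distrib] at h2
    have h3 : ∑ j ∈ Finset.Icc 1 N, 2 * max (d j - m) 0 * (x - m)
        = 2 * (x - m) * ∑ j ∈ Finset.Icc 1 N, max (d j - m) 0 := by
      rw [Finset.mul_sum]; exact Finset.sum_congr rfl fun j _ => by ring
    rw [h3] at h2
    rw [hgd x, hgd m]
    have h4 : α / 2 * x ^ 2 = α / 2 * m ^ 2 + α * m * (x - m) + α / 2 * (x - m) ^ 2 := by ring
    nlinarith [h2]
  -- arithmetic facts about A
  have hk_pos : (0:ℝ) < α + kstar := by positivity
  have hT : ∑ j ∈ Finset.Icc 1 kstar, d j = (α + kstar) * A kstar := by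
    rw [hA]; field_simp
  have hA1 : d 1 = (α + 1) * A 1 := by
    have h := hA 1
    rw [Finset.Icc_self, Finset.sum_singleton] at h
    rw [h]; push_cast
    field_simp
  have hchain : ∀ k, 1 ≤ k → k ≤ kstar → A 1 ≤ A k ∧ (2 ≤ k → A k ≤ d k) := by
    intro k h1
    induction k, h1 using Nat.le_induction with
    | base => exact fun _ => ⟨le_rfl, by omega⟩
    | succ n hn ih =>
      intro hsucc
      have hnk : n < kstar := by omega
      have ihh := ih (le_of_lt hnk)
      have hle : A n ≤ d (n + 1) := by
        have h := hleast n hn hnk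
        push_neg at h
        exact h.2
      have hrec : (α + (↑n + 1)) * A (n + 1) = (α + n) * A n + d (n + 1) := by
        have hs : ∑ j ∈ Finset.Icc 1 (n + 1), d j = ∑ j ∈ Finset.Icc 1 n, d j + d (n + 1) :=
          Finset.sum_Icc_succ_top (by omega) d
        have p1 : (0:ℝ) < α + n := by positivity
        have p2 : (0:ℝ) < α + (↑n + 1) := by positivity
        rw [hA (n + 1), hA n, hs]
        push_cast
        field_simp
      have p1 : (0:ℝ) < α + n := by positivity
      have p2 : (0:ℝ) < α + (↑n + 1 : ℝ) := by positivity
      constructor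
      · have hstep : A n ≤ A (n + 1) := by nlinarith [hrec, hle]
        exact le_trans ihh.1 hstep
      · intro _
        nlinarith [hrec, hle, mul_nonneg p1.le (sub_nonneg.2 hle)]
  have hA1le : A 1 ≤ A kstar := (hchain kstar hk1 le_rfl).1
  have hanti := d_anti hsort
  have hdk_ge : 0 ≤ A kstar → A kstar ≤ d kstar := by
    intro hpos
    rcases eq_or_lt_of_le hk1 with h | h
    · have hd1 : d kstar = (α + 1) * A kstar := by rw [← h]; exact_mod_cast hA1
      nlinarith
    · exact (hchain kstar hk1 le_rfl).2 (by omega)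
  have hdj_lt : ∀ j, kstar < j → j ≤ N → d j < A kstar := by
    intro j hj hjN
    have hc : A kstar > d (kstar + 1) := hcond.resolve_left (by omega)
    have : d j ≤ d (kstar + 1) := hanti (kstar + 1) j (by omega) (by omega) hjN
    linarith
  have hsplit : ∀ f : ℕ → ℝ,
      ∑ j ∈ Finset.Icc 1 kstar, f j + ∑ j ∈ Finset.Ioc kstar N, f j
        = ∑ j ∈ Finset.Icc 1 N, f j := by
    intro f
    rw [show Finset.Icc 1 kstar = Finset.Ioc 0 kstar from rfl,
        show Finset.Icc 1 N = Finset.Ioc 0 N from rfl]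
    exact Finset.sum_Ioc_consecutive _ (Nat.zero_le _) hkN
  have hcard : ((Finset.Icc 1 kstar).card : ℝ) = (kstar : ℝ) := by
    rw [Nat.card_Icc]; push_cast; ring
  -- sign condition
  have hsign : ∀ x ∈ Set.Icc (0:ℝ) 1,
      0 ≤ (x - m) * (α * m - ∑ j ∈ Finset.Icc 1 N, max (d j - m) 0) := by
    intro x hx
    rcases le_total (A kstar) 0 with h0 | h0
    · -- m = 0
      have hm0 : m = 0 := by
        rw [hm, min_eq_right (le_trans h0 zero_le_one), max_eq_left h0]
      have hd1 : d 1 ≤ 0 := by nlinarith [hA1, hA1le]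
      have hS : ∑ j ∈ Finset.Icc 1 N, max (d j - m) 0 = 0 := by
        refine Finset.sum_eq_zero fun j hj => ?_
        rw [Finset.mem_Icc] at hj
        have : d j ≤ d 1 := hanti 1 j le_rfl hj.1 hj.2
        rw [hm0]
        exact max_eq_right (by linarith)
      rw [hS, hm0]
      ring_nf
      exact le_rfl
    · rcases le_total (A kstar) 1 with h1 | h1
      · -- m = A kstar, interior: derivative is zero
        have hmA : m = A kstar := by rw [hm, min_eq_right h1, max_eq_right h0]
        have hdkm : A kstar ≤ d kstar := hdk_ge h0
        have e1 : ∀ j ∈ Finset.Icc 1 kstar, max (d j - m) 0 = d j - m := by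
          intro j hj
          rw [Finset.mem_Icc] at hj
          have : d kstar ≤ d j := hanti j kstar hj.1 hj.2 hkN
          rw [hmA]
          exact max_eq_left (by linarith)
        have e2 : ∀ j ∈ Finset.Ioc kstar N, max (d j - m) 0 = 0 := by
          intro j hj
          rw [Finset.mem_Ioc] at hj
          have := hdj_lt j hj.1 hj.2
          rw [hmA]
          exact max_eq_right (by linarith)
        have hS : ∑ j ∈ Finset.Icc 1 N, max (d j - m) 0 = α * m := by
          rw [← hsplit (fun j => max (d j - m) 0)]
          rw [Finset.sum_congr rfl e1, Finset.sum_congr rfl e2, Finset.sum_sub_distrib,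
            Finset.sum_const, nsmul_eq_mul, hT, hcard, hmA, Finset.sum_const_zero]
          ring
        rw [hS]
        ring_nf
        exact le_rfl
      · -- m = 1
        have hm1 : m = 1 := by rw [hm, min_eq_left h1, max_eq_right zero_le_one]
        have s1 : ∑ j ∈ Finset.Icc 1 kstar, (d j - m) ≤
            ∑ j ∈ Finset.Icc 1 kstar, max (d j - m) 0 :=
          Finset.sum_le_sum fun j _ => le_max_left _ _
        have s2 : ∑ j ∈ Finset.Icc 1 kstar, max (d j - m) 0 ≤
            ∑ j ∈ Finset.Icc 1 N, max (d j - m) 0 :=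
          Finset.sum_le_sum_of_subset_of_nonneg (Finset.Icc_subset_Icc_right hkN)
            (fun j _ _ => le_max_right _ _)
        have s3 : ∑ j ∈ Finset.Icc 1 kstar, (d j - m) = (α + kstar) * A kstar - kstar * m := by
          rw [Finset.sum_sub_distrib, Finset.sum_const, nsmul_eq_mul, hT, hcard]
        rw [hm1] at s1 s2 s3 ⊢
        have hge : α ≤ ∑ j ∈ Finset.Icc 1 N, max (d j - 1) 0 := by
          nlinarith [s1, s2, s3, hk_pos]
        have hx1 : x ≤ 1 := hx.2
        nlinarith [mul_nonneg (by linarith : (0:ℝ) ≤ 1 - x) (by linarith : (0:ℝ) ≤ (∑ j ∈ Finset.Icc 1 N, max (d j - 1) 0) - α), hge]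
  -- conclude
  constructor
  · intro x hx
    have h1 := hmain x
    have h2 := hsign x hx
    nlinarith [sq_nonneg (x - m)]
  · intro x hx heq
    have h1 := hmain x
    have h2 := hsign x hx
    have h4 : (x - m) ^ 2 = 0 := by
      have := sq_nonneg (x - m)
      nlinarith
    have := sq_eq_zero_iff.mp h4
    linarith [sub_eq_zero.mp this]
end
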